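/- Normal-family convergence criterion: let (q_n) be a normal family of analytic functions on the unit disk 𝔻, and q_∞ analytic on 𝔻. Suppose there exist ζ₀ ∈ 𝔻 and a neighborhood V of ζ₀ such that |q_n(ζ)| → |q_∞(ζ)| for all ζ ∈ V, and q_n(ζ₀) > 0 for all n with q_∞(ζ₀) > 0. Then q_n → q_∞ uniformly on compact subsets of 𝔻. -/

import Mathlib

noncomputable section
open Polynomial Filter Set MeasureTheory
open scoped Classical

/-- Identification lemma: if `Q k → g` locally uniformly on the disk, `|Q k| → |qinf|` on a
neighborhood `V` of `ζ₀`, and the values at `ζ₀` are positive reals, then `g = qinf` on the disk. -/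
lemma normal_family_identify
    (Q : ℕ → ℂ → ℂ) (g qinf : ℂ → ℂ)
    (hg : DifferentiableOn ℂ g (Metric.ball (0 : ℂ) 1))
    (hqinf : DifferentiableOn ℂ qinf (Metric.ball (0 : ℂ) 1))
    (hconv : TendstoLocallyUniformlyOn Q g Filter.atTop (Metric.ball (0 : ℂ) 1))
    (ζ₀ : ℂ) (hζ₀ : ζ₀ ∈ Metric.ball (0 : ℂ) 1)
    (V : Set ℂ) (hV : V ∈ nhds ζ₀) (hVsub : V ⊆ Metric.ball (0 : ℂ) 1)
    (habs : ∀ ζ ∈ V, Filter.Tendsto (fun n => ‖Q n ζ‖) Filter.atTop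
      (nhds (‖qinf ζ‖)))
    (hpos : ∀ n, 0 < (Q n ζ₀).re ∧ (Q n ζ₀).im = 0)
    (hposinf : 0 < (qinf ζ₀).re ∧ (qinf ζ₀).im = 0) :
    Set.EqOn g qinf (Metric.ball (0 : ℂ) 1) := by
  have hζ₀V : ζ₀ ∈ V := mem_of_mem_nhds hV
  -- |g| = |qinf| on V
  have habsg : ∀ ζ ∈ V, ‖g ζ‖ = ‖qinf ζ‖ := by
    intro ζ hζ
    have h1 : Filter.Tendsto (fun n => ‖Q n ζ‖) Filter.atTop
        (nhds (‖g ζ‖)) :=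
      (continuous_norm.tendsto (g ζ)).comp (hconv.tendsto_at (hVsub hζ))
    exact tendsto_nhds_unique h1 (habs ζ hζ)
  -- properties of g ζ₀
  have hgz : Filter.Tendsto (fun n => Q n ζ₀) Filter.atTop (nhds (g ζ₀)) :=
    hconv.tendsto_at hζ₀
  have him : (g ζ₀).im = 0 := by
    have h2 : Filter.Tendsto (fun n => (Q n ζ₀).im) Filter.atTop (nhds (g ζ₀).im) :=
      (Complex.continuous_im.tendsto _).comp hgz
    have h3 : Filter.Tendsto (fun n => (Q n ζ₀).im) Filter.atTop (nhds 0) :=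
      tendsto_const_nhds.congr (fun n => ((hpos n).2).symm)
    exact tendsto_nhds_unique h2 h3
  have hre : 0 ≤ (g ζ₀).re :=
    ge_of_tendsto' ((Complex.continuous_re.tendsto _).comp hgz) (fun n => (hpos n).1.le)
  have habs0 : ‖g ζ₀‖ = ‖qinf ζ₀‖ := habsg ζ₀ hζ₀V
  have hqr : qinf ζ₀ = ((qinf ζ₀).re : ℂ) := Complex.ext rfl (by simp [hposinf.2])
  have hgr : g ζ₀ = ((g ζ₀).re : ℂ) := Complex.ext rfl (by simp [him])
  have habsq : ‖qinf ζ₀‖ = (qinf ζ₀).re := by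
    rw [hqr, Complex.norm_real, Real.norm_eq_abs, abs_of_pos hposinf.1]
    simp
  have habsgz : ‖g ζ₀‖ = (g ζ₀).re := by
    rw [hgr, Complex.norm_real, Real.norm_eq_abs, abs_of_nonneg hre]
    simp
  have hgq0 : g ζ₀ = qinf ζ₀ := by
    rw [hgr, hqr]
    norm_cast
    rw [← habsgz, ← habsq, habs0]
  have hne : qinf ζ₀ ≠ 0 := by
    intro h
    simpa [h] using hposinf.1
  -- find a small ball around ζ₀ inside V on which qinf ≠ 0
  have hcont : ContinuousAt qinf ζ₀ :=
    (hqinf.differentiableAt (Metric.isOpen_ball.mem_nhds hζ₀)).continuousAt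
  have hU : V ∩ qinf ⁻¹' ({0}ᶜ) ∈ nhds ζ₀ :=
    Filter.inter_mem hV (hcont.preimage_mem_nhds (compl_singleton_mem_nhds hne))
  obtain ⟨r, hr, hrsub⟩ := Metric.mem_nhds_iff.mp hU
  set B := Metric.ball ζ₀ r with hB
  have hBV : B ⊆ V := fun z hz => (hrsub hz).1
  have hBne : ∀ z ∈ B, qinf z ≠ 0 := fun z hz => (hrsub hz).2
  have hBball : B ⊆ Metric.ball (0 : ℂ) 1 := fun z hz => hVsub (hBV hz)
  have hζ₀B : ζ₀ ∈ B := Metric.mem_ball_self hr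
  -- the quotient h = g / qinf has constant modulus 1 on B
  have hdiff : DifferentiableOn ℂ (fun z => g z / qinf z) B :=
    (hg.mono hBball).div (hqinf.mono hBball) hBne
  have habs1 : ∀ z ∈ B, ‖g z / qinf z‖ = 1 := by
    intro z hz
    rw [norm_div, habsg z (hBV hz), div_self]
    simpa using hBne z hz
  have hmax : IsMaxOn (norm ∘ fun z => g z / qinf z) B ζ₀ := by
    intro z hz
    show ‖g z / qinf z‖ ≤ ‖g ζ₀ / qinf ζ₀‖
    rw [habs1 z hz, habs1 ζ₀ hζ₀B]
  have hEq : Set.EqOn (fun z => g z / qinf z) (Function.const ℂ (g ζ₀ / qinf ζ₀)) B :=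
    Complex.eqOn_of_isPreconnected_of_isMaxOn_norm (convex_ball ζ₀ r).isPreconnected
      Metric.isOpen_ball hdiff hζ₀B hmax
  have hEqB : Set.EqOn g qinf B := by
    intro z hz
    have h1 := hEq hz
    simp only [Function.const] at h1
    rw [hgq0, div_self hne] at h1
    exact (div_eq_one_iff_eq (hBne z hz)).mp h1
  -- identity theorem
  exact (hg.analyticOnNhd Metric.isOpen_ball).eqOn_of_preconnected_of_eventuallyEq
    (hqinf.analyticOnNhd Metric.isOpen_ball) (convex_ball (0 : ℂ) 1).isPreconnected hζ₀
    (Filter.eventuallyEq_of_mem (Metric.ball_mem_nhds ζ₀ hr) hEqB)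

/-- Normal-family convergence criterion: if `(q_n)` is a normal family of analytic
functions on the unit disk, `q_∞` is analytic, `|q_n| → |q_∞|` pointwise on a
neighborhood of some `ζ₀`, and `q_n(ζ₀) > 0`, `q_∞(ζ₀) > 0`, then `q_n → q_∞`
uniformly on compact subsets of the disk. -/
theorem normal_family_convergence
    (q : ℕ → ℂ → ℂ) (qinf : ℂ → ℂ)
    (hq : ∀ n, DifferentiableOn ℂ (q n) (Metric.ball (0 : ℂ) 1))
    (hnormal : ∀ s : ℕ → ℕ, StrictMono s →
      ∃ (t : ℕ → ℕ) (g : ℂ → ℂ), StrictMono t ∧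
        DifferentiableOn ℂ g (Metric.ball (0 : ℂ) 1) ∧
        TendstoLocallyUniformlyOn (fun k => q (s (t k))) g Filter.atTop
          (Metric.ball (0 : ℂ) 1))
    (hqinf : DifferentiableOn ℂ qinf (Metric.ball (0 : ℂ) 1))
    (ζ₀ : ℂ) (hζ₀ : ζ₀ ∈ Metric.ball (0 : ℂ) 1)
    (V : Set ℂ) (hV : V ∈ nhds ζ₀) (hVsub : V ⊆ Metric.ball (0 : ℂ) 1)
    (habs : ∀ ζ ∈ V, Filter.Tendsto (fun n => ‖q n ζ‖) Filter.atTop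
      (nhds (‖qinf ζ‖)))
    (hpos : ∀ n, 0 < (q n ζ₀).re ∧ (q n ζ₀).im = 0)
    (hposinf : 0 < (qinf ζ₀).re ∧ (qinf ζ₀).im = 0) :
    TendstoLocallyUniformlyOn q qinf Filter.atTop (Metric.ball (0 : ℂ) 1) := by
  by_contra hcon
  rw [tendstoLocallyUniformlyOn_iff_forall_isCompact Metric.isOpen_ball] at hcon
  push_neg at hcon
  obtain ⟨K, hK, hKc, hKnot⟩ := hcon
  rw [Metric.tendstoUniformlyOn_iff] at hKnot
  push_neg at hKnot
  obtain ⟨ε, hε, hfreq⟩ := hKnot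
  obtain ⟨s, hs, hsP⟩ := Filter.extraction_of_frequently_atTop hfreq
  obtain ⟨t, g, ht, hg, hconv⟩ := hnormal s hs
  have hcomp : Filter.Tendsto (fun k => s (t k)) Filter.atTop Filter.atTop :=
    (hs.comp ht).tendsto_atTop
  have hEq : Set.EqOn g qinf (Metric.ball (0 : ℂ) 1) :=
    normal_family_identify (fun k => q (s (t k))) g qinf hg hqinf hconv ζ₀ hζ₀ V hV hVsub
      (fun ζ hζ => (habs ζ hζ).comp hcomp) (fun k => hpos (s (t k))) hposinf
  have hKu : TendstoUniformlyOn (fun k => q (s (t k))) g Filter.atTop K :=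
    (tendstoLocallyUniformlyOn_iff_forall_isCompact Metric.isOpen_ball).mp hconv K hK hKc
  rw [Metric.tendstoUniformlyOn_iff] at hKu
  obtain ⟨N, hN⟩ := Filter.eventually_atTop.mp (hKu ε hε)
  obtain ⟨x, hxK, hxd⟩ := hsP (t N)
  have hlt := hN N le_rfl x hxK
  rw [hEq (hK hxK)] at hlt
  exact absurd hxd (not_le.mpr hlt)

end
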